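/- Feasibility invariant of Algorithm STO: assume p_i ≥ 0 and d_max,i ≥ 0 for all i, ŝ(0)_i ≤ s⁺_i for all i ∈ {0,…,l−1}, and ŝ(0)_{l−1} + t_{l−1} ≤ T. Then after each iteration of the outer loop of Algorithm STO (i.e., after each index a has been processed and the start times recomputed), the current pair (ŝ(d), d) is feasible for the service-time LP; in particular d_a ≥ 0 at each update. -/

import Mathlib

/-- Feasibility for the service-time LP: time-window bounds on start times,
bounds on service times, and the chain constraints with the convention `s_l := T`. -/
def Feasible (l : ℕ) (T : ℝ) (t dmax smin smax s d : ℕ → ℝ) : Prop :=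
  (∀ i < l, smin i ≤ s i ∧ s i ≤ smax i) ∧
  (∀ i < l, 0 ≤ d i ∧ d i ≤ dmax i) ∧
  (∀ i < l, s i + d i + t i ≤ (if i + 1 = l then T else s (i + 1)))

/-- The earliest-start schedule: `ŝ(d)_0 := s⁻_0` and
`ŝ(d)_{i+1} := max { ŝ(d)_i + d_i + t_i, s⁻_{i+1} }`. -/
def sHat (t smin d : ℕ → ℝ) : ℕ → ℝ
  | 0 => smin 0
  | i + 1 => max (sHat t smin d i + d i + t i) (smin (i + 1))

/-- One iteration of Algorithm STO: process index `a`, setting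
`d_a := min { d_max,a, min_{j=a+1}^{l} ( s⁺_j - ŝ(d)_a - Σ_{m=a}^{j-1} (d_m + t_m) ) }`,
with the conventions `s⁺_l := T` and `d_a = 0` inside the sum. -/
def stoStep (l : ℕ) (T : ℝ) (t dmax smin smax : ℕ → ℝ) (d : ℕ → ℝ) (a : ℕ) : ℕ → ℝ :=
  if h : a < l then
    Function.update d a (min (dmax a)
      ((Finset.Icc (a + 1) l).inf' (Finset.nonempty_Icc.mpr (by omega))
        fun j => (if j = l then T else smax j) - sHat t smin d a
          - ∑ m ∈ Finset.Ico a j, ((if m = a then 0 else d m) + t m)))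
  else d

/-- Service times produced by Algorithm STO after processing the indices in `order`,
starting from the all-zero service times. -/
def stoD (l : ℕ) (T : ℝ) (t dmax smin smax : ℕ → ℝ) (order : List ℕ) : ℕ → ℝ :=
  order.foldl (stoStep l T t dmax smin smax) fun _ => 0

lemma smin_le_sHat (t smin d : ℕ → ℝ) : ∀ i, smin i ≤ sHat t smin d i
  | 0 => le_refl _
  | _ + 1 => le_max_right _ _

lemma sHat_step (t smin d : ℕ → ℝ) (i : ℕ) :
    sHat t smin d i + d i + t i ≤ sHat t smin d (i + 1) := le_max_left _ _

lemma sHat_congr (t smin d d' : ℕ → ℝ) :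
    ∀ i, (∀ m, m < i → d m = d' m) → sHat t smin d i = sHat t smin d' i
  | 0, _ => rfl
  | i + 1, h => by
      show max _ _ = max _ _
      rw [sHat_congr t smin d d' i (fun m hm => h m (Nat.lt_succ_of_lt hm)),
        h i (Nat.lt_succ_self i)]

lemma sHat_sum_le (t smin d : ℕ → ℝ) (a : ℕ) :
    ∀ j, a ≤ j → sHat t smin d a + ∑ m ∈ Finset.Ico a j, (d m + t m) ≤ sHat t smin d j := by
  intro j hj
  induction j, hj using Nat.le_induction with
  | base => simp
  | succ j hj ih =>
      rw [Finset.sum_Ico_succ_top hj]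
      have h2 := sHat_step t smin d j
      linarith

lemma sHat_update_le (t smin d : ℕ → ℝ) (a : ℕ) (v : ℝ) :
    ∀ j, a ≤ j → sHat t smin (Function.update d a v) j ≤
      max (sHat t smin d j)
        (sHat t smin d a + ∑ m ∈ Finset.Ico a j, (Function.update d a v m + t m)) := by
  intro j hj
  induction j, hj using Nat.le_induction with
  | base =>
      rw [Finset.Ico_self, Finset.sum_empty, add_zero,
        sHat_congr t smin _ d a (fun m hm => Function.update_of_ne (Nat.ne_of_lt hm) _ _)]
      exact le_max_left _ _
  | succ j hj ih =>
      set d' := Function.update d a v with hd'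
      have h1 : sHat t smin d' (j + 1) = max (sHat t smin d' j + d' j + t j) (smin (j + 1)) := rfl
      rw [h1, Finset.sum_Ico_succ_top hj]
      apply max_le
      · rcases le_max_iff.mp ih with h | h
        · rcases eq_or_ne j a with rfl | hne
          · apply le_max_of_le_right
            have he : Finset.Ico j j = (∅ : Finset ℕ) := Finset.Ico_self j
            rw [he, Finset.sum_empty]
            have : sHat t smin d j = sHat t smin d' j :=
              (sHat_congr t smin d' d j (fun m hm => Function.update_of_ne (Nat.ne_of_lt hm) _ _)).symm
            linarith
          · apply le_max_of_le_left
            have h2 := sHat_step t smin d j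
            have hd : d' j = d j := Function.update_of_ne hne _ _
            linarith
        · apply le_max_of_le_right
          linarith
      · exact le_max_of_le_left ((smin_le_sHat t smin d (j + 1)).trans (le_refl _))

lemma sum_update_eq (d t : ℕ → ℝ) (a j : ℕ) (v : ℝ) (h : a < j) :
    ∑ m ∈ Finset.Ico a j, (Function.update d a v m + t m)
      = v + ∑ m ∈ Finset.Ico a j, ((if m = a then 0 else d m) + t m) := by
  have hcg : ∀ m ∈ Finset.Ico a j,
      Function.update d a v m + t m
        = (if m = a then v else 0) + ((if m = a then (0 : ℝ) else d m) + t m) := by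
    intro m _
    rcases eq_or_ne m a with rfl | hm
    · simp
    · simp [Function.update_of_ne hm, hm]
  rw [Finset.sum_congr rfl hcg, Finset.sum_add_distrib]
  congr 1
  rw [Finset.sum_ite_eq' (Finset.Ico a j) a (fun _ => v)]
  simp [Finset.mem_Ico, h, Nat.le_refl]

lemma sto_step_main (l : ℕ) (T : ℝ) (t dmax smin smax d : ℕ → ℝ) (a : ℕ) (ha : a < l)
    (hdmax : ∀ i < l, 0 ≤ dmax i)
    (hfeas : Feasible l T t dmax smin smax (sHat t smin d) d) :
    0 ≤ stoStep l T t dmax smin smax d a a ∧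
    Feasible l T t dmax smin smax (sHat t smin (stoStep l T t dmax smin smax d a))
      (stoStep l T t dmax smin smax d a) := by
  obtain ⟨hs, hd, hc⟩ := hfeas
  set v : ℝ := min (dmax a)
      ((Finset.Icc (a + 1) l).inf' (Finset.nonempty_Icc.mpr (by omega))
        fun j => (if j = l then T else smax j) - sHat t smin d a
          - ∑ m ∈ Finset.Ico a j, ((if m = a then 0 else d m) + t m)) with hv
  have hstep : stoStep l T t dmax smin smax d a = Function.update d a v := by
    rw [stoStep, dif_pos ha]
  rw [hstep]
  set d' := Function.update d a v with hd'def
  -- the target values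
  have hterm : ∀ j, a + 1 ≤ j → j ≤ l →
      v ≤ (if j = l then T else smax j) - sHat t smin d a
          - ∑ m ∈ Finset.Ico a j, ((if m = a then 0 else d m) + t m) := by
    intro j h1 h2
    exact (min_le_right _ _).trans (Finset.inf'_le _ (Finset.mem_Icc.mpr ⟨h1, h2⟩))
  -- chain bounds with old d
  have hchain : ∀ j, a + 1 ≤ j → j ≤ l →
      sHat t smin d a + ∑ m ∈ Finset.Ico a j, (d m + t m)
        ≤ (if j = l then T else smax j) := by
    intro j h1 h2
    rcases eq_or_lt_of_le h2 with rfl | hjl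
    · rw [if_pos rfl]
      have hj1 : j - 1 + 1 = j := by omega
      have haj : a ≤ j - 1 := by omega
      have hsum : ∑ m ∈ Finset.Ico a j, (d m + t m)
          = ∑ m ∈ Finset.Ico a (j - 1), (d m + t m) + (d (j - 1) + t (j - 1)) := by
        rw [← hj1, Finset.sum_Ico_succ_top haj, hj1]
      have h3 := sHat_sum_le t smin d a (j - 1) haj
      have h4 := hc (j - 1) (by omega)
      rw [hj1, if_pos rfl] at h4
      rw [hsum]; linarith
    · rw [if_neg (Nat.ne_of_lt hjl)]
      exact (sHat_sum_le t smin d a j (by omega)).trans (hs j hjl).2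
  -- nonnegativity of v
  have hv0 : 0 ≤ v := by
    apply le_min (hdmax a ha)
    apply Finset.le_inf'
    intro j hj
    obtain ⟨h1, h2⟩ := Finset.mem_Icc.mp hj
    have hsle : ∑ m ∈ Finset.Ico a j, ((if m = a then 0 else d m) + t m)
        ≤ ∑ m ∈ Finset.Ico a j, (d m + t m) := by
      apply Finset.sum_le_sum
      intro m hm
      obtain ⟨hm1, hm2⟩ := Finset.mem_Ico.mp hm
      rcases eq_or_ne m a with rfl | hne
      · rw [if_pos rfl]
        have := (hd m (by omega)).1
        linarith
      · rw [if_neg hne]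
    have := hchain j h1 h2
    linarith
  -- key upper bound with new d'
  have hup : ∀ j, a + 1 ≤ j → j ≤ l →
      sHat t smin d a + ∑ m ∈ Finset.Ico a j, (d' m + t m)
        ≤ (if j = l then T else smax j) := by
    intro j h1 h2
    rw [hd'def, sum_update_eq d t a j v (by omega)]
    have := hterm j h1 h2
    linarith
  have hSa : sHat t smin d' a = sHat t smin d a :=
    sHat_congr t smin d' d a (fun m hm => Function.update_of_ne (Nat.ne_of_lt hm) _ _)
  constructor
  · rw [hd'def, Function.update_self]; exact hv0
  refine ⟨fun i hi => ⟨smin_le_sHat t smin d' i, ?_⟩, fun i hi => ?_, fun i hi => ?_⟩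
  · -- upper window bound
    rcases le_or_gt i a with hia | hia
    · rw [sHat_congr t smin d' d i (fun m hm => Function.update_of_ne (by omega) _ _)]
      exact (hs i hi).2
    · have h := sHat_update_le t smin d a v i (by omega)
      have h2 := hup i hia (by omega)
      rw [if_neg (Nat.ne_of_lt hi)] at h2
      simp only [← hd'def] at h
      exact h.trans (max_le (hs i hi).2 (by rw [hd'def]; linarith))
  · -- service time bounds
    rcases eq_or_ne i a with rfl | hne
    · rw [hd'def, Function.update_self]
      exact ⟨hv0, min_le_left _ _⟩
    · rw [hd'def, Function.update_of_ne hne]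
      exact hd i hi
  · -- chain constraints
    rcases eq_or_ne (i + 1) l with hil | hil
    · rw [if_pos hil]
      rcases eq_or_ne i a with rfl | hne
      · have h2 := hup l (by omega) (le_refl l)
        rw [if_pos rfl] at h2
        have hsum : ∑ m ∈ Finset.Ico i l, (d' m + t m) = d' i + t i := by
          rw [← hil, Finset.sum_Ico_succ_top (le_refl i), Finset.Ico_self,
            Finset.sum_empty, zero_add]
        rw [hSa] at *
        linarith [hsum ▸ h2]
      · have hai : a < i := by omega
        have h := sHat_update_le t smin d a v i (by omega)
        simp only [← hd'def] at h
        have hdi : d' i = d i := Function.update_of_ne hne _ _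
        rcases le_max_iff.mp h with h1 | h1
        · have h2 := hc i (by omega)
          rw [if_pos hil] at h2
          linarith
        · have h2 := hup l (by omega) (le_refl l)
          rw [if_pos rfl] at h2
          have hsum : ∑ m ∈ Finset.Ico a l, (d' m + t m)
              = ∑ m ∈ Finset.Ico a i, (d' m + t m) + (d' i + t i) := by
            rw [← hil, Finset.sum_Ico_succ_top (by omega)]
          rw [hsum] at h2
          linarith
    · rw [if_neg hil]
      exact sHat_step t smin d' i

/-- Feasibility invariant of Algorithm STO: after processing any prefix of the index order,
the current pair `(ŝ(d), d)` is feasible for the service-time LP; in particular the value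
assigned to `d_a` at each update is nonnegative. -/
theorem sto_invariant
    (l : ℕ) (hl : 1 ≤ l) (T : ℝ) (p t dmax smin smax : ℕ → ℝ)
    (hp : ∀ i < l, 0 ≤ p i)
    (hdmax : ∀ i < l, 0 ≤ dmax i)
    (hwin : ∀ i < l, sHat t smin (fun _ => 0) i ≤ smax i)
    (hT : sHat t smin (fun _ => 0) (l - 1) + t (l - 1) ≤ T)
    (order : List ℕ) (hperm : order.Perm (List.range l))
    (hsorted : order.Pairwise fun i j => p j ≤ p i) :
    (∀ pre : List ℕ, pre <+: order →
      Feasible l T t dmax smin smax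
        (sHat t smin (stoD l T t dmax smin smax pre))
        (stoD l T t dmax smin smax pre)) ∧
    (∀ (pre : List ℕ) (a : ℕ), pre ++ [a] <+: order →
      0 ≤ stoD l T t dmax smin smax (pre ++ [a]) a) := by
  have hmem : ∀ x ∈ order, x < l := by
    intro x hx
    have : x ∈ List.range l := hperm.mem_iff.mp hx
    simpa using this
  have hbase : Feasible l T t dmax smin smax (sHat t smin fun _ => 0) (fun _ => 0) := by
    refine ⟨fun i hi => ⟨smin_le_sHat t smin _ i, hwin i hi⟩,
      fun i hi => ⟨le_refl 0, hdmax i hi⟩, fun i hi => ?_⟩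
    split_ifs with h
    · have hi1 : i = l - 1 := by omega
      subst hi1
      simpa using hT
    · exact sHat_step t smin (fun _ => 0) i
  have happ : ∀ (pre : List ℕ) (a : ℕ),
      stoD l T t dmax smin smax (pre ++ [a])
        = stoStep l T t dmax smin smax (stoD l T t dmax smin smax pre) a := by
    intro pre a
    simp [stoD, List.foldl_append]
  have main : ∀ pre : List ℕ, (∀ x ∈ pre, x < l) →
      Feasible l T t dmax smin smax
        (sHat t smin (stoD l T t dmax smin smax pre))
        (stoD l T t dmax smin smax pre) := by
    intro pre
    induction pre using List.reverseRecOn with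
    | nil => intro _; exact hbase
    | append_singleton pre a ih =>
        intro hall
        have hpre : ∀ x ∈ pre, x < l := fun x hx => hall x (by simp [hx])
        have ha : a < l := hall a (by simp)
        rw [happ]
        exact (sto_step_main l T t dmax smin smax _ a ha hdmax (ih hpre)).2
  refine ⟨fun pre hpre => main pre (fun x hx => hmem x (hpre.subset hx)), ?_⟩
  intro pre a hpre
  have hall : ∀ x ∈ pre ++ [a], x < l := fun x hx => hmem x (hpre.subset hx)
  have ha : a < l := hall a (by simp)
  have h := (sto_step_main l T t dmax smin smax (stoD l T t dmax smin smax pre) a ha hdmax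
    (main pre (fun x hx => hall x (by simp [hx])))).1
  rw [happ]
  exact h
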